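/- With the same fan data ($\rho_0,\ldots,\rho_l$, $b_i$, $b_0<0$, $l>2$, $\rho_\alpha=-\rho_0$, $\gamma = \sum_{i=1}^{\alpha-1}(3-b_i)-3$): for any linear functional $R \in \mathrm{Hom}(\mathbb{Z}^2,\mathbb{Z})$ with $\langle \rho_\alpha, R\rangle = 1$, one has $\langle \rho_{\alpha-1}, R\rangle - \langle \rho_1, R\rangle = \gamma$. -/

import Mathlib

/-- The determinant of two vectors in `ℤ²`. -/
def det2 (v w : ℤ × ℤ) : ℤ := v.1 * w.2 - v.2 * w.1

/-- The combinatorial data of a smooth complete toric surface: primitive ray generators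
`ρ 0, …, ρ l` in counterclockwise cyclic order (each consecutive pair is a positively
oriented basis of `ℤ²`), self-intersection data `b` with `b i • ρ i = ρ (i-1) + ρ (i+1)`,
the cones covering the plane, and distinct cones having disjoint interiors. -/
structure SmoothCompleteFan (l : ℕ) where
  ρ : ZMod (l + 1) → ℤ × ℤ
  b : ZMod (l + 1) → ℤ
  inj : Function.Injective ρ
  smooth_ccw : ∀ i, det2 (ρ i) (ρ (i + 1)) = 1
  rel : ∀ i, b i • ρ i = ρ (i - 1) + ρ (i + 1)
  complete : ∀ v : ℤ × ℤ, ∃ (i : ZMod (l + 1)) (a c : ℕ),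
      v = (a : ℤ) • ρ i + (c : ℤ) • ρ (i + 1)
  proper : ∀ i j : ZMod (l + 1), i ≠ j → ∀ v : ℤ × ℤ,
      ¬ ((∃ a c : ℕ, 0 < a ∧ 0 < c ∧ v = (a : ℤ) • ρ i + (c : ℤ) • ρ (i + 1)) ∧
         (∃ a c : ℕ, 0 < a ∧ 0 < c ∧ v = (a : ℤ) • ρ j + (c : ℤ) • ρ (j + 1)))

/-- The evaluation pairing between `ℤ²` and its dual (a functional represented by a
vector `R`). -/
def pairing (v R : ℤ × ℤ) : ℤ := v.1 * R.1 + v.2 * R.2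

set_option maxHeartbeats 1000000

lemma det2_smul_left (k : ℤ) (v w : ℤ × ℤ) : det2 (k • v) w = k * det2 v w := by
  simp [det2, Prod.smul_fst, Prod.smul_snd, smul_eq_mul]; ring

lemma det2_smul_right (k : ℤ) (v w : ℤ × ℤ) : det2 v (k • w) = k * det2 v w := by
  simp [det2, Prod.smul_fst, Prod.smul_snd, smul_eq_mul]; ring

lemma det2_add_left (u v w : ℤ × ℤ) : det2 (u + v) w = det2 u w + det2 v w := by
  simp [det2]; ring

lemma det2_add_right (u v w : ℤ × ℤ) : det2 u (v + w) = det2 u v + det2 u w := by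
  simp [det2]; ring

lemma det2_neg_right (v w : ℤ × ℤ) : det2 v (-w) = - det2 v w := by
  simp [det2]; ring

lemma det2_self (v : ℤ × ℤ) : det2 v v = 0 := by simp [det2]; ring

lemma det2_zero_left (w : ℤ × ℤ) : det2 0 w = 0 := by simp [det2]

lemma det2_sub_right (u v w : ℤ × ℤ) : det2 u (v - w) = det2 u v - det2 u w := by
  simp [det2]; ring

lemma det2_sub_left (u v w : ℤ × ℤ) : det2 (u - v) w = det2 u w - det2 v w := by
  simp [det2]; ring

lemma det2_swap (v w : ℤ × ℤ) : det2 v w = - det2 w v := by simp [det2]; ring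

lemma basis_expand (u w v : ℤ × ℤ) (h : det2 u w = 1) :
    v = det2 v w • u + det2 u v • w := by
  have h1 : v.1 = (det2 v w) * u.1 + (det2 u v) * w.1 := by
    simp only [det2] at *; linear_combination (-v.1) * h
  have h2 : v.2 = (det2 v w) * u.2 + (det2 u v) * w.2 := by
    simp only [det2] at *; linear_combination (-v.2) * h
  ext
  · simpa using h1
  · simpa using h2

lemma collinear_of_det_zero (u w z : ℤ × ℤ) (hz : det2 u z = 1) (h : det2 u w = 0) :
    ∃ s : ℤ, w = s • u := by
  refine ⟨det2 w z, ?_⟩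
  have hh := basis_expand u z w hz
  rw [h] at hh
  simpa using hh

lemma pairing_add_left (u v R : ℤ × ℤ) : pairing (u + v) R = pairing u R + pairing v R := by
  simp [pairing]; ring

lemma pairing_smul_left (k : ℤ) (v R : ℤ × ℤ) : pairing (k • v) R = k * pairing v R := by
  simp [pairing, Prod.smul_fst, Prod.smul_snd, smul_eq_mul]; ring

/-- The main combinatorial chain lemma. -/
lemma chain_formula (n : ℕ) : ∀ v : ℕ → ℤ × ℤ,
    (∀ i < n + 2, det2 (v i) (v (i+1)) = 1) →
    v (n+2) = - v 0 →
    (∀ i, 1 ≤ i → i ≤ n + 1 → 0 < det2 (v 0) (v i)) →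
    det2 (v (n+1)) (v 1)
      = (∑ j ∈ Finset.range (n+1), det2 (v j) (v (j+2))) - 3 * (n : ℤ) := by
  induction n with
  | zero =>
    intro v hdet hopp _
    simp [det2_self, hopp, det2_neg_right]
  | succ n IH =>
    intro v hdet hopp hpos
    -- the recurrence relation derived from unimodularity
    have hrel : ∀ m, m + 2 ≤ n + 3 →
        v m + v (m+2) = det2 (v m) (v (m+2)) • v (m+1) := by
      intro m hm
      have h1 : det2 (v m) (v (m+1)) = 1 := hdet m (by omega)
      have h2 : det2 (v (m+1)) (v (m+2)) = 1 := hdet (m+1) (by omega)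
      have e := basis_expand (v m) (v (m+1)) (v (m+2)) h1
      have h3 : det2 (v (m+2)) (v (m+1)) = -1 := by
        rw [det2_swap]; rw [h2]
      rw [h3] at e
      have e1 := congrArg Prod.fst e
      have e2 := congrArg Prod.snd e
      simp only [Prod.fst_add, Prod.snd_add, Prod.smul_fst, Prod.smul_snd,
        smul_eq_mul, Prod.fst_neg, Prod.snd_neg, neg_one_mul, neg_mul] at e1 e2
      ext
      · simp only [Prod.fst_add, Prod.smul_fst, smul_eq_mul]; linarith
      · simp only [Prod.snd_add, Prod.smul_snd, smul_eq_mul]; linarith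
    have drec : ∀ m, m + 2 ≤ n + 3 →
        det2 (v 0) (v m) + det2 (v 0) (v (m+2))
          = det2 (v m) (v (m+2)) * det2 (v 0) (v (m+1)) := by
      intro m hm
      have h := congrArg (det2 (v 0)) (hrel m hm)
      rw [det2_add_right, det2_smul_right] at h
      exact h
    -- find a blow-down index
    obtain ⟨k, hk, hBk⟩ : ∃ k, k ≤ n + 1 ∧ det2 (v k) (v (k+2)) = 1 := by
      set d : ℕ → ℤ := fun j => det2 (v 0) (v j) with hd
      have hd0 : d 0 = 0 := det2_self _
      have hdtop : d (n+3) = 0 := by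
        show det2 (v 0) (v (n+3)) = 0
        have : v (n+3) = - v 0 := hopp
        rw [this, det2_neg_right, det2_self]; ring
      obtain ⟨i0, hi0S, hi0max⟩ := Finset.exists_max_image (Finset.Ico 1 (n+3)) d
        ⟨1, by simp⟩
      set T := @Finset.filter ℕ
        (fun j => ∀ m ∈ Finset.Ico 1 (n+3), d m ≤ d j)
        (fun j => Finset.decidableDforallFinset) (Finset.Ico 1 (n+3)) with hT
      have hTne : T.Nonempty := ⟨i0, Finset.mem_filter.2 ⟨hi0S, hi0max⟩⟩
      have hiT : T.max' hTne ∈ T := T.max'_mem hTne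
      set i := T.max' hTne with hi
      obtain ⟨hiS, himax⟩ := Finset.mem_filter.1 hiT
      rw [Finset.mem_Ico] at hiS
      have hi1 : 1 ≤ i := hiS.1
      have hi2 : i < n + 3 := hiS.2
      have hdi : 0 < d i := hpos i hi1 (by omega)
      have hnext : d (i+1) ≤ d i - 1 := by
        rcases eq_or_lt_of_le (show i + 1 ≤ n + 3 by omega) with h | h
        · rw [h, hdtop]; omega
        · have hmem : i + 1 ∈ Finset.Ico 1 (n+3) := Finset.mem_Ico.2 ⟨by omega, h⟩
          have hle := himax (i+1) hmem
          rcases eq_or_lt_of_le hle with heq | hlt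
          · exfalso
            have hmT : i + 1 ∈ T := Finset.mem_filter.2
              ⟨hmem, fun m hm => (himax m hm).trans (le_of_eq heq.symm)⟩
            have := Finset.le_max' T (i+1) hmT
            omega
          · omega
      have hprev : d (i-1) ≤ d i := by
        rcases Nat.eq_or_lt_of_le hi1 with h | h
        · have h1' : 0 < d 1 := hpos 1 le_rfl (by omega)
          rw [← h, show (1:ℕ) - 1 = 0 from rfl, hd0]; omega
        · exact himax (i-1) (Finset.mem_Ico.2 ⟨by omega, by omega⟩)
      have hprev0 : 0 ≤ d (i-1) := by
        rcases Nat.eq_or_lt_of_le hi1 with h | h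
        · rw [← h]; rw [show (1:ℕ) - 1 = 0 from rfl, hd0]
        · exact le_of_lt (hpos (i-1) (by omega) (by omega))
      have hnext0 : 0 ≤ d (i+1) := by
        rcases eq_or_lt_of_le (show i + 1 ≤ n + 3 by omega) with h | h
        · rw [h, hdtop]
        · exact le_of_lt (hpos (i+1) (by omega) (by omega))
      refine ⟨i - 1, by omega, ?_⟩
      have e2 : i - 1 + 2 = i + 1 := by omega
      have hdd := drec (i-1) (by omega)
      rw [e2, show i - 1 + 1 = i from by omega] at hdd
      rw [e2]
      set B := det2 (v (i-1)) (v (i+1)) with hB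
      have hle : B ≤ 1 := by nlinarith
      have hge0 : 0 ≤ B := by nlinarith
      have hB01 : B = 0 ∨ B = 1 := by omega
      rcases hB01 with h0 | h1
      · exfalso
        rw [h0] at hdd
        have hA : d (i-1) = 0 := by linarith
        have hC : d (i+1) = 0 := by linarith
        have hi1' : i = 1 := by
          by_contra hne
          have := hpos (i-1) (by omega) (by omega)
          linarith
        have hi2' : i + 1 = n + 3 := by
          by_contra hne
          have := hpos (i+1) (by omega) (by omega)
          linarith
        omega
      · exact h1
    -- the blown-down chain
    set v' : ℕ → ℤ × ℤ := fun j => if j ≤ k then v j else v (j+1) with hv'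
    have hv'lo : ∀ j, j ≤ k → v' j = v j := by intro j h; simp [hv', h]
    have hv'hi : ∀ j, k < j → v' j = v (j+1) := by
      intro j h; simp [hv', Nat.not_le.2 h]
    have hvk2 : v (k+2) = v (k+1) - v k := by
      have h := hrel k (by omega)
      rw [hBk, one_smul] at h
      exact eq_sub_of_add_eq' h
    have hdet' : ∀ j, j < n + 2 → det2 (v' j) (v' (j+1)) = 1 := by
      intro j hj
      rcases lt_trichotomy (j+1) (k+1) with h | h | h
      · rw [hv'lo j (by omega), hv'lo (j+1) (by omega)]; exact hdet j (by omega)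
      · have hjk : j = k := by omega
        subst hjk
        rw [hv'lo j le_rfl, hv'hi (j+1) (by omega)]
        exact hBk
      · rw [hv'hi j (by omega), hv'hi (j+1) (by omega)]
        exact hdet (j+1) (by omega)
    have hopp' : v' (n+2) = - v' 0 := by
      rw [hv'hi (n+2) (by omega), hv'lo 0 (by omega)]
      exact hopp
    have hpos' : ∀ j, 1 ≤ j → j ≤ n + 1 → 0 < det2 (v' 0) (v' j) := by
      intro j h1 h2
      rw [hv'lo 0 (by omega)]
      by_cases h : j ≤ k
      · rw [hv'lo j h]; exact hpos j h1 (by omega)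
      · rw [hv'hi j (by omega)]; exact hpos (j+1) (by omega) (by omega)
    have hIH := IH v' hdet' hopp' hpos'
    have fact_k2 : k ≤ n → det2 (v k) (v (k+3)) = det2 (v (k+1)) (v (k+3)) - 1 := by
      intro hkn
      have hvk : v k = v (k+1) - v (k+2) := by rw [hvk2]; abel
      rw [hvk, det2_sub_left, hdet (k+2) (by omega)]
    rcases Nat.lt_or_ge k 1 with hk0 | hk1
    · -- k = 0 : the blown-down ray is adjacent to ρ 0
      have hk0' : k = 0 := by omega
      subst hk0'
      rw [hv'hi (n+1) (by omega), hv'hi 1 (by omega)] at hIH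
      -- hIH : det2 (v (n+1+1)) (v (1+1)) = ...
      have hsum' : ∑ j ∈ Finset.range (n+1), det2 (v' j) (v' (j+2))
          = (det2 (v 1) (v 3) - 1)
            + ∑ j ∈ Finset.Ico 2 (n+2), det2 (v j) (v (j+2)) := by
        rw [Finset.range_eq_Ico, Finset.sum_eq_sum_Ico_succ_bot (by omega)]
        congr 1
        · rw [hv'lo 0 le_rfl, hv'hi (0+2) (by omega)]
          rw [show v (0+2+1) = v 3 from congrArg v (by omega)]
          exact fact_k2 (by omega)
        · rw [Finset.sum_Ico_eq_sum_range, Finset.sum_Ico_eq_sum_range]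
          rw [show n + 1 - 1 = n + 2 - 2 from by omega]
          refine Finset.sum_congr rfl (fun x _ => ?_)
          rw [hv'hi (1+x) (by omega), hv'hi (1+x+2) (by omega)]
          rw [show v (1+x+1) = v (2+x) from congrArg v (by omega),
            show v (1+x+2+1) = v (2+x+2) from congrArg v (by omega)]
      have hsum : ∑ j ∈ Finset.range (n+2), det2 (v j) (v (j+2))
          = 1 + det2 (v 1) (v 3)
            + ∑ j ∈ Finset.Ico 2 (n+2), det2 (v j) (v (j+2)) := by
        rw [Finset.range_eq_Ico, Finset.sum_eq_sum_Ico_succ_bot (show 0 < n+2 by omega),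
          Finset.sum_eq_sum_Ico_succ_bot (show 0+1 < n+2 by omega)]
        rw [show v (0+2) = v 2 from congrArg v (by omega),
          show v (0+1+2) = v 3 from congrArg v (by omega),
          show v (0+1) = v 1 from congrArg v (by omega),
          show (0:ℕ)+1+1 = 2 from by omega, hBk]
        ring
      have hv0 : det2 (v (n+2)) (v 0) = -1 := by
        have h := hdet (n+2) (by omega)
        rw [show v (n+2+1) = v (n+1+2) from congrArg v (by omega), hopp,
          det2_neg_right] at h
        linarith
      have hvk2' : v 2 = v 1 - v 0 := by
        rw [show v 2 = v (0+2) from congrArg v (by omega),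
          show v 1 = v (0+1) from congrArg v (by omega)]
        exact hvk2
      have hlhs : det2 (v (n+2)) (v 2)
          = det2 (v (n+2)) (v 1) - det2 (v (n+2)) (v 0) := by
        rw [hvk2', det2_sub_right]
      rw [show v (n+1+1) = v (n+2) from congrArg v (by omega),
        show v (1+1) = v 2 from congrArg v (by omega)] at hIH
      show det2 (v (n+2)) (v 1)
          = (∑ j ∈ Finset.range (n+2), det2 (v j) (v (j+2))) - 3 * ((n+1 : ℕ) : ℤ)
      push_cast
      push_cast at hIH
      linarith
    · -- k ≥ 1
      obtain ⟨m, rfl⟩ : ∃ m, k = m + 1 := ⟨k - 1, by omega⟩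
      have fact_k1 : det2 (v m) (v (m+3)) = det2 (v m) (v (m+2)) - 1 := by
        rw [show m + 3 = (m+1) + 2 from rfl, hvk2, det2_sub_right,
          show m + 1 + 1 = m + 2 from rfl, hdet m (by omega)]
      rcases Nat.lt_or_ge m n with hmn | hmn
      · -- middle case : 1 ≤ k ≤ n
        rw [hv'hi (n+1) (by omega), hv'lo 1 (by omega)] at hIH
        have h1 : ∑ j ∈ Finset.Ico 0 m, det2 (v' j) (v' (j+2))
            = ∑ j ∈ Finset.Ico 0 m, det2 (v j) (v (j+2)) := by
          refine Finset.sum_congr rfl (fun x hx => ?_)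
          rw [Finset.mem_Ico] at hx
          rw [hv'lo x (by omega), hv'lo (x+2) (by omega)]
        have h2 : det2 (v' m) (v' (m+2)) = det2 (v m) (v (m+2)) - 1 := by
          rw [hv'lo m (by omega), hv'hi (m+2) (by omega),
            show v (m+2+1) = v (m+3) from congrArg v (by omega)]
          exact fact_k1
        have h3 : det2 (v' (m+1)) (v' (m+1+2))
            = det2 (v (m+2)) (v (m+4)) - 1 := by
          rw [hv'lo (m+1) le_rfl, hv'hi (m+1+2) (by omega),
            show v (m+1+2+1) = v (m+1+3) from congrArg v (by omega)]
          rw [fact_k2 (by omega)]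
        have h4 : ∑ j ∈ Finset.Ico (m+1+1) (n+1), det2 (v' j) (v' (j+2))
            = ∑ j ∈ Finset.Ico (m+3) (n+2), det2 (v j) (v (j+2)) := by
          rw [Finset.sum_Ico_eq_sum_range, Finset.sum_Ico_eq_sum_range,
            show n + 1 - (m+1+1) = n + 2 - (m+3) from by omega]
          refine Finset.sum_congr rfl (fun x _ => ?_)
          rw [hv'hi (m+1+1+x) (by omega), hv'hi (m+1+1+x+2) (by omega),
            show v (m+1+1+x+1) = v (m+3+x) from congrArg v (by omega),
            show v (m+1+1+x+2+1) = v (m+3+x+2) from congrArg v (by omega)]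
        have hsplit' : ∑ j ∈ Finset.range (n+1), det2 (v' j) (v' (j+2))
            = (∑ j ∈ Finset.Ico 0 m, det2 (v j) (v (j+2)))
              + (det2 (v m) (v (m+2)) - 1) + (det2 (v (m+2)) (v (m+4)) - 1)
              + ∑ j ∈ Finset.Ico (m+3) (n+2), det2 (v j) (v (j+2)) := by
          rw [Finset.range_eq_Ico,
            ← Finset.sum_Ico_consecutive (fun j => det2 (v' j) (v' (j+2)))
              (show 0 ≤ m by omega) (show m ≤ n+1 by omega),
            Finset.sum_eq_sum_Ico_succ_bot (show m < n+1 by omega),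
            Finset.sum_eq_sum_Ico_succ_bot (show m+1 < n+1 by omega)]
          rw [h1, h2, h3, h4]; ring
        have hsplit : ∑ j ∈ Finset.range (n+2), det2 (v j) (v (j+2))
            = (∑ j ∈ Finset.Ico 0 m, det2 (v j) (v (j+2)))
              + det2 (v m) (v (m+2)) + 1 + det2 (v (m+2)) (v (m+4))
              + ∑ j ∈ Finset.Ico (m+3) (n+2), det2 (v j) (v (j+2)) := by
          rw [Finset.range_eq_Ico,
            ← Finset.sum_Ico_consecutive (fun j => det2 (v j) (v (j+2)))
              (show 0 ≤ m by omega) (show m ≤ n+2 by omega),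
            Finset.sum_eq_sum_Ico_succ_bot (show m < n+2 by omega),
            Finset.sum_eq_sum_Ico_succ_bot (show m+1 < n+2 by omega),
            Finset.sum_eq_sum_Ico_succ_bot (show m+1+1 < n+2 by omega)]
          rw [hBk]
          rw [show v (m+1+1) = v (m+2) from congrArg v (by omega),
            show v (m+1+1+2) = v (m+4) from congrArg v (by omega),
            show (m:ℕ)+1+1+1 = m+3 from by omega]
          ring
        rw [show v (n+1+1) = v (n+2) from congrArg v (by omega)] at hIH
        show det2 (v (n+2)) (v 1)
            = (∑ j ∈ Finset.range (n+2), det2 (v j) (v (j+2))) - 3 * ((n+1 : ℕ) : ℤ)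
        push_cast
        linarith
      · -- k = n + 1
        have hm : m = n := by omega
        subst hm
        rw [hv'lo (m+1) (by omega), hv'lo 1 (by omega)] at hIH
        have hsum' : ∑ j ∈ Finset.range (m+1), det2 (v' j) (v' (j+2))
            = (∑ j ∈ Finset.range m, det2 (v j) (v (j+2)))
              + (det2 (v m) (v (m+2)) - 1) := by
          rw [Finset.sum_range_succ]
          congr 1
          · refine Finset.sum_congr rfl (fun x hx => ?_)
            rw [Finset.mem_range] at hx
            rw [hv'lo x (by omega), hv'lo (x+2) (by omega)]
          · rw [hv'lo m (by omega), hv'hi (m+2) (by omega),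
              show v (m+2+1) = v (m+3) from congrArg v (by omega)]
            exact fact_k1
        have hsum : ∑ j ∈ Finset.range (m+2), det2 (v j) (v (j+2))
            = (∑ j ∈ Finset.range m, det2 (v j) (v (j+2)))
              + det2 (v m) (v (m+2)) + 1 := by
          rw [Finset.sum_range_succ, Finset.sum_range_succ, hBk]
        have hv1 : v (m+1) = v (m+2) + v 0 := by
          have h := hvk2
          rw [hopp] at h
          rw [show v (m+1+1) = v (m+2) from congrArg v (by omega)] at h
          linear_combination h
        have hlhs : det2 (v (m+1)) (v 1)
            = det2 (v (m+2)) (v 1) + det2 (v 0) (v 1) := by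
          rw [hv1, det2_add_left]
        have hd01 : det2 (v 0) (v 1) = 1 := by
          have h := hdet 0 (by omega)
          rwa [show v (0+1) = v 1 from congrArg v (by omega)] at h
        show det2 (v (m+2)) (v 1)
            = (∑ j ∈ Finset.range (m+2), det2 (v j) (v (j+2))) - 3 * ((m+1 : ℕ) : ℤ)
        push_cast
        linarith

section Main

variable (l : ℕ) (F : SmoothCompleteFan l)

/-- Positivity of the rays strictly between `ρ 0` and `ρ α = -ρ 0`. -/
lemma ray_pos (hl : 2 < l) (α : ℕ) (hα1 : 1 < α) (hαl : α < l)
    (hopp : F.ρ ((α : ℕ) : ZMod (l + 1)) = - F.ρ 0) :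
    ∀ i : ℕ, 1 ≤ i → i ≤ α - 1 →
      0 < det2 (F.ρ ((0 : ℕ) : ZMod (l+1))) (F.ρ ((i : ℕ) : ZMod (l+1))) := by
  have hcast : ∀ a b : ℕ, a ≤ l → b ≤ l →
      ((a : ℕ) : ZMod (l+1)) = ((b : ℕ) : ZMod (l+1)) → a = b := by
    intro a b ha hb h
    have := congrArg ZMod.val h
    rwa [ZMod.val_natCast_of_lt (by omega), ZMod.val_natCast_of_lt (by omega)] at this
  have hsucc : ∀ j : ℕ, F.ρ (((j : ℕ) : ZMod (l+1)) + 1) = F.ρ ((j+1 : ℕ) : ZMod (l+1)) := by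
    intro j; congr 1; push_cast; ring
  have hsmooth : ∀ j : ℕ, det2 (F.ρ ((j : ℕ) : ZMod (l+1))) (F.ρ ((j+1 : ℕ) : ZMod (l+1))) = 1 := by
    intro j
    have h := F.smooth_ccw ((j : ℕ) : ZMod (l+1))
    rwa [hsucc j] at h
  intro i
  induction i with
  | zero => intro h; omega
  | succ i IHi =>
    intro _ hle
    rcases Nat.eq_zero_or_pos i with h0 | h1
    · subst h0
      have := hsmooth 0
      norm_num at this ⊢
      rw [this]; norm_num
    -- inductive step
    have hdi : 0 < det2 (F.ρ ((0 : ℕ) : ZMod (l+1))) (F.ρ ((i : ℕ) : ZMod (l+1))) :=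
      IHi h1 (by omega)
    by_contra hnp
    push_neg at hnp
    have h01 : det2 (F.ρ ((0 : ℕ) : ZMod (l+1))) (F.ρ ((1 : ℕ) : ZMod (l+1))) = 1 := hsmooth 0
    rcases eq_or_lt_of_le hnp with heq | hlt
    · -- d (i+1) = 0 : collinearity, contradiction with injectivity
      obtain ⟨s, hs⟩ := collinear_of_det_zero (F.ρ ((0 : ℕ) : ZMod (l+1)))
        (F.ρ ((i+1 : ℕ) : ZMod (l+1))) (F.ρ ((1 : ℕ) : ZMod (l+1))) h01 heq
      have hsu : IsUnit s := by
        apply IsUnit.of_mul_eq_one (a := s) (det2 (F.ρ ((i : ℕ) : ZMod (l+1))) (F.ρ ((0 : ℕ) : ZMod (l+1))))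
        have h := hsmooth i
        rw [hs, det2_smul_right] at h
        linarith [h]
      rcases Int.isUnit_iff.1 hsu with h1' | h1'
      · subst h1'
        rw [one_smul] at hs
        have := hcast (i+1) 0 (by omega) (by omega) (F.inj hs)
        omega
      · subst h1'
        rw [neg_one_smul] at hs
        rw [show F.ρ ((0 : ℕ) : ZMod (l+1)) = F.ρ 0 from by norm_num, ← hopp] at hs
        have := hcast (i+1) α (by omega) (by omega) (F.inj hs)
        omega
    · -- d (i+1) < 0 : the chain crosses the line ℝ·ρ 0, contradiction with properness
      obtain ⟨aa, haa⟩ : ∃ aa : ℤ,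
          aa = - det2 (F.ρ ((0 : ℕ) : ZMod (l+1))) (F.ρ ((i+1 : ℕ) : ZMod (l+1))) := ⟨_, rfl⟩
      obtain ⟨cc, hcc⟩ : ∃ cc : ℤ,
          cc = det2 (F.ρ ((0 : ℕ) : ZMod (l+1))) (F.ρ ((i : ℕ) : ZMod (l+1))) := ⟨_, rfl⟩
      have haa0 : 0 < aa := by omega
      have hcc0 : 0 < cc := by omega
      obtain ⟨w, hw⟩ : ∃ w : ℤ × ℤ,
          w = aa • F.ρ ((i : ℕ) : ZMod (l+1)) + cc • F.ρ ((i+1 : ℕ) : ZMod (l+1)) := ⟨_, rfl⟩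
      have hw0 : det2 (F.ρ ((0 : ℕ) : ZMod (l+1))) w = 0 := by
        rw [hw, det2_add_right, det2_smul_right, det2_smul_right, ← hcc, haa]; ring
      obtain ⟨t, htw⟩ := collinear_of_det_zero (F.ρ ((0 : ℕ) : ZMod (l+1))) w
        (F.ρ ((1 : ℕ) : ZMod (l+1))) h01 hw0
      have hwi : det2 w (F.ρ ((i+1 : ℕ) : ZMod (l+1))) = aa := by
        rw [hw, det2_add_left, det2_smul_left, det2_smul_left, hsmooth i, det2_self]
        ring
      have hwc : det2 (F.ρ ((i : ℕ) : ZMod (l+1))) w = cc := by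
        rw [hw, det2_add_right, det2_smul_right, det2_smul_right, hsmooth i, det2_self]
        ring
      have ht : t ≠ 0 := by
        intro h0'
        rw [h0', zero_smul] at htw
        rw [htw, det2_zero_left] at hwi
        omega
      -- both signs of t lead to a contradiction with properness
      rcases ht.lt_or_gt with htneg | htpos
      · -- w points in the direction of -ρ 0 = ρ α
        obtain ⟨P, hP⟩ : ∃ P : ℤ × ℤ,
            P = F.ρ ((α : ℕ) : ZMod (l+1)) + F.ρ ((α+1 : ℕ) : ZMod (l+1)) := ⟨_, rfl⟩
        obtain ⟨p, hp⟩ : ∃ p : ℤ, p = det2 P (F.ρ ((i+1 : ℕ) : ZMod (l+1))) := ⟨_, rfl⟩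
        obtain ⟨q, hq⟩ : ∃ q : ℤ, q = det2 (F.ρ ((i : ℕ) : ZMod (l+1))) P := ⟨_, rfl⟩
        obtain ⟨N, hN⟩ : ∃ N : ℕ, N = p.natAbs + q.natAbs + 1 := ⟨_, rfl⟩
        obtain ⟨u, hu⟩ : ∃ u : ℤ × ℤ, u = (N : ℤ) • w + P := ⟨_, rfl⟩
        have hA : det2 u (F.ρ ((i+1 : ℕ) : ZMod (l+1))) = (N : ℤ) * aa + p := by
          rw [hu, det2_add_left, det2_smul_left, hwi, ← hp]
        have hC : det2 (F.ρ ((i : ℕ) : ZMod (l+1))) u = (N : ℤ) * cc + q := by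
          rw [hu, det2_add_right, det2_smul_right, hwc, ← hq]
        have hNp : -p + 1 ≤ (N : ℤ) := by omega
        have hNq : -q + 1 ≤ (N : ℤ) := by omega
        have hN0 : (0 : ℤ) ≤ (N : ℤ) := by omega
        have hApos : 0 < (N : ℤ) * aa + p := by nlinarith
        have hCpos : 0 < (N : ℤ) * cc + q := by nlinarith
        have hu1 : u = ((N : ℤ) * aa + p) • F.ρ ((i : ℕ) : ZMod (l+1))
            + ((N : ℤ) * cc + q) • F.ρ ((i+1 : ℕ) : ZMod (l+1)) := by
          have := basis_expand (F.ρ ((i : ℕ) : ZMod (l+1))) (F.ρ ((i+1 : ℕ) : ZMod (l+1))) u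
            (hsmooth i)
          rwa [hA, hC] at this
        have hu2 : u = ((N : ℤ) * (-t) + 1) • F.ρ ((α : ℕ) : ZMod (l+1))
            + (1 : ℤ) • F.ρ ((α+1 : ℕ) : ZMod (l+1)) := by
          rw [hu, htw, hP, hopp]
          ext <;> simp [Prod.smul_fst, Prod.smul_snd, smul_eq_mul] <;> ring
        have htN : 0 < (N : ℤ) * (-t) + 1 := by
          have h1' : (1:ℤ) ≤ -t := by omega
          have h0' : (0:ℤ) ≤ (N : ℤ) := by omega
          nlinarith
        refine F.proper ((i : ℕ) : ZMod (l+1)) ((α : ℕ) : ZMod (l+1)) ?_ u ⟨?_, ?_⟩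
        · intro h
          have := hcast i α (by omega) (by omega) h
          omega
        · refine ⟨((N : ℤ) * aa + p).toNat, ((N : ℤ) * cc + q).toNat, by omega, by omega, ?_⟩
          rw [Int.toNat_of_nonneg (le_of_lt hApos), Int.toNat_of_nonneg (le_of_lt hCpos),
            hsucc i]
          exact hu1
        · refine ⟨((N : ℤ) * (-t) + 1).toNat, 1, by omega, by omega, ?_⟩
          rw [Int.toNat_of_nonneg (le_of_lt htN), Nat.cast_one, hsucc α]
          exact hu2
      · -- w points in the direction of ρ 0
        obtain ⟨P, hP⟩ : ∃ P : ℤ × ℤ,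
            P = F.ρ ((0 : ℕ) : ZMod (l+1)) + F.ρ ((1 : ℕ) : ZMod (l+1)) := ⟨_, rfl⟩
        obtain ⟨p, hp⟩ : ∃ p : ℤ, p = det2 P (F.ρ ((i+1 : ℕ) : ZMod (l+1))) := ⟨_, rfl⟩
        obtain ⟨q, hq⟩ : ∃ q : ℤ, q = det2 (F.ρ ((i : ℕ) : ZMod (l+1))) P := ⟨_, rfl⟩
        obtain ⟨N, hN⟩ : ∃ N : ℕ, N = p.natAbs + q.natAbs + 1 := ⟨_, rfl⟩
        obtain ⟨u, hu⟩ : ∃ u : ℤ × ℤ, u = (N : ℤ) • w + P := ⟨_, rfl⟩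
        have hA : det2 u (F.ρ ((i+1 : ℕ) : ZMod (l+1))) = (N : ℤ) * aa + p := by
          rw [hu, det2_add_left, det2_smul_left, hwi, ← hp]
        have hC : det2 (F.ρ ((i : ℕ) : ZMod (l+1))) u = (N : ℤ) * cc + q := by
          rw [hu, det2_add_right, det2_smul_right, hwc, ← hq]
        have hNp : -p + 1 ≤ (N : ℤ) := by omega
        have hNq : -q + 1 ≤ (N : ℤ) := by omega
        have hN0 : (0 : ℤ) ≤ (N : ℤ) := by omega
        have hApos : 0 < (N : ℤ) * aa + p := by nlinarith
        have hCpos : 0 < (N : ℤ) * cc + q := by nlinarith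
        have hu1 : u = ((N : ℤ) * aa + p) • F.ρ ((i : ℕ) : ZMod (l+1))
            + ((N : ℤ) * cc + q) • F.ρ ((i+1 : ℕ) : ZMod (l+1)) := by
          have := basis_expand (F.ρ ((i : ℕ) : ZMod (l+1))) (F.ρ ((i+1 : ℕ) : ZMod (l+1))) u
            (hsmooth i)
          rwa [hA, hC] at this
        have hu2 : u = ((N : ℤ) * t + 1) • F.ρ ((0 : ℕ) : ZMod (l+1))
            + (1 : ℤ) • F.ρ ((1 : ℕ) : ZMod (l+1)) := by
          rw [hu, htw, hP]
          ext <;> simp [Prod.smul_fst, Prod.smul_snd, smul_eq_mul] <;> ring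
        have htN : 0 < (N : ℤ) * t + 1 := by
          have h1' : (1:ℤ) ≤ t := by omega
          have h0' : (0:ℤ) ≤ (N : ℤ) := by omega
          nlinarith
        refine F.proper ((i : ℕ) : ZMod (l+1)) ((0 : ℕ) : ZMod (l+1)) ?_ u ⟨?_, ?_⟩
        · intro h
          have := hcast i 0 (by omega) (by omega) h
          omega
        · refine ⟨((N : ℤ) * aa + p).toNat, ((N : ℤ) * cc + q).toNat, by omega, by omega, ?_⟩
          rw [Int.toNat_of_nonneg (le_of_lt hApos), Int.toNat_of_nonneg (le_of_lt hCpos),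
            hsucc i]
          exact hu1
        · refine ⟨((N : ℤ) * t + 1).toNat, 1, by omega, by omega, ?_⟩
          rw [Int.toNat_of_nonneg (le_of_lt htN), Nat.cast_one, hsucc 0]
          exact hu2


end Main

/-- With `b 0 < 0`, `l > 2`, `α` the unique index with `1 < α < l` and `ρ α = -ρ 0`, and
`γ = (∑_{i=1}^{α-1} (3 - b i)) - 3`: for any functional `R` with `⟨ρ α, R⟩ = 1` one has
`⟨ρ (α-1), R⟩ - ⟨ρ 1, R⟩ = γ`. -/
theorem pairing_diff_eq_gamma (l : ℕ) (hl : 2 < l) (F : SmoothCompleteFan l)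
    (hb0 : F.b 0 < 0) (α : ℕ) (hα1 : 1 < α) (hαl : α < l)
    (hopp : F.ρ (α : ZMod (l + 1)) = - F.ρ 0)
    (γ : ℤ) (hγ : γ = (∑ i ∈ Finset.Ico 1 α, (3 - F.b ((i : ℕ) : ZMod (l + 1)))) - 3)
    (R : ℤ × ℤ) (hR : pairing (F.ρ ((α : ℕ) : ZMod (l + 1))) R = 1) :
    pairing (F.ρ (((α - 1 : ℕ) : ℕ) : ZMod (l + 1))) R
      - pairing (F.ρ ((1 : ℕ) : ZMod (l + 1))) R = γ := by
  have hsucc : ∀ j : ℕ, F.ρ (((j : ℕ) : ZMod (l+1)) + 1) = F.ρ ((j+1 : ℕ) : ZMod (l+1)) := by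
    intro j; congr 1; push_cast; ring
  have hsmooth : ∀ j : ℕ,
      det2 (F.ρ ((j : ℕ) : ZMod (l+1))) (F.ρ ((j+1 : ℕ) : ZMod (l+1))) = 1 := by
    intro j
    have h := F.smooth_ccw ((j : ℕ) : ZMod (l+1))
    rwa [hsucc j] at h
  have hb : ∀ j : ℕ, F.b ((j+1 : ℕ) : ZMod (l+1))
      = det2 (F.ρ ((j : ℕ) : ZMod (l+1))) (F.ρ ((j+2 : ℕ) : ZMod (l+1))) := by
    intro j
    have h := F.rel ((j+1 : ℕ) : ZMod (l+1))
    rw [show ((j+1 : ℕ) : ZMod (l+1)) - 1 = ((j : ℕ) : ZMod (l+1)) from by push_cast; ring,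
      show ((j+1 : ℕ) : ZMod (l+1)) + 1 = ((j+2 : ℕ) : ZMod (l+1)) from by push_cast; ring] at h
    have h2 := congrArg (det2 (F.ρ ((j : ℕ) : ZMod (l+1)))) h
    rw [det2_smul_right, hsmooth j, det2_add_right, det2_self] at h2
    simpa using h2
  have hpos := ray_pos l F hl α hα1 hαl hopp
  obtain ⟨n, rfl⟩ : ∃ n, α = n + 2 := ⟨α - 2, by omega⟩
  have hchain : det2 (F.ρ ((n+1 : ℕ) : ZMod (l+1))) (F.ρ ((1 : ℕ) : ZMod (l+1)))
      = (∑ j ∈ Finset.range (n+1),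
          det2 (F.ρ ((j : ℕ) : ZMod (l+1))) (F.ρ ((j+2 : ℕ) : ZMod (l+1)))) - 3 * (n : ℤ) := by
    have h := chain_formula n (fun j => F.ρ ((j : ℕ) : ZMod (l+1)))
      (fun i _ => hsmooth i)
      (by
        show F.ρ ((n+2 : ℕ) : ZMod (l+1)) = - F.ρ ((0 : ℕ) : ZMod (l+1))
        rw [show ((0 : ℕ) : ZMod (l+1)) = 0 from Nat.cast_zero]
        exact hopp)
      (fun i h1 h2 => hpos i h1 (by omega))
    exact h
  have hsum : ∑ i ∈ Finset.Ico 1 (n+2), (3 - F.b ((i : ℕ) : ZMod (l+1)))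
      = 3 * ((n : ℤ) + 1) - ∑ j ∈ Finset.range (n+1),
          det2 (F.ρ ((j : ℕ) : ZMod (l+1))) (F.ρ ((j+2 : ℕ) : ZMod (l+1))) := by
    rw [Finset.sum_sub_distrib, Finset.sum_const, Nat.card_Ico]
    congr 1
    · rw [nsmul_eq_mul]; push_cast; ring
    · rw [Finset.sum_Ico_eq_sum_range, show n+2-1 = n+1 from rfl]
      refine Finset.sum_congr rfl (fun x _ => ?_)
      rw [show 1+x = x+1 from by omega, hb x]
  have hA := hsmooth (n+1)
  have h1α : det2 (F.ρ ((1 : ℕ) : ZMod (l+1))) (F.ρ ((n+2 : ℕ) : ZMod (l+1))) = 1 := by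
    rw [hopp, det2_neg_right]
    have h := hsmooth 0
    rw [show ((0 : ℕ) : ZMod (l+1)) = 0 from Nat.cast_zero,
      show ((0+1 : ℕ) : ZMod (l+1)) = ((1 : ℕ) : ZMod (l+1)) from by norm_num] at h
    rw [det2_swap (F.ρ ((1 : ℕ) : ZMod (l+1))) (F.ρ 0)]
    linarith
  have hexp := basis_expand (F.ρ ((n+1 : ℕ) : ZMod (l+1))) (F.ρ ((n+2 : ℕ) : ZMod (l+1)))
    (F.ρ ((1 : ℕ) : ZMod (l+1))) hA
  rw [h1α, one_smul] at hexp
  have hpair := congrArg (fun x => pairing x R) hexp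
  rw [pairing_add_left, pairing_smul_left, hR] at hpair
  rw [hγ, hsum, show (n+2)-1 = n+1 from rfl]
  linarith [hchain, hpair]
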